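/- Twirling two qubits over SU(2) decoheres the singlet–triplet coherence and depolarizes the triplet block: for every linear operator ρ on ℂ²⊗ℂ², ∫_{SU(2)} (U⊗U) ρ (U⊗U)† dU = Tr(Π₁ ρ)·(Π₁/3) + Tr(Π₀ ρ)·Π₀. -/

import Mathlib

/-!
STATEMENT 7: Twirling two qubits over SU(2) decoheres the singlet–triplet coherence
and depolarizes the triplet block: for every linear operator ρ on ℂ²⊗ℂ²,
∫_{SU(2)} (U⊗U) ρ (U⊗U)† dU = Tr(Π₁ ρ)·(Π₁/3) + Tr(Π₀ ρ)·Π₀,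
where Π₀ = |ψ⁻⟩⟨ψ⁻| is the projector onto the singlet and Π₁ = I − Π₀.
The two-qubit space ℂ²⊗ℂ² is realized as ℂ^(Fin 2 × Fin 2), with U⊗U the
Kronecker product.
-/

open MeasureTheory Kronecker

attribute [local instance] Matrix.normedAddCommGroup Matrix.normedSpace

noncomputable instance : MeasurableSpace (Matrix (Fin 2) (Fin 2) ℂ) :=
  inferInstanceAs (MeasurableSpace (Fin 2 → Fin 2 → ℂ))

/-- The group structure on SU(2) (inverse given by the conjugate transpose). -/
noncomputable instance : Group ↥(Matrix.specialUnitaryGroup (Fin 2) ℂ) :=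
  { (inferInstance : Monoid ↥(Matrix.specialUnitaryGroup (Fin 2) ℂ)) with
    inv := fun U => ⟨star (U : Matrix (Fin 2) (Fin 2) ℂ), by
      obtain ⟨hu, hdet⟩ := U.2
      simp only [SetLike.mem_coe, MonoidHom.mem_mker] at hdet
      have hdet' : Matrix.det (U : Matrix (Fin 2) (Fin 2) ℂ) = 1 := hdet
      refine Submonoid.mem_inf.mpr ⟨Unitary.star_mem hu, ?_⟩
      show Matrix.detMonoidHom _ = 1
      show Matrix.det (star (U : Matrix (Fin 2) (Fin 2) ℂ)) = 1
      rw [Matrix.star_eq_conjTranspose, Matrix.det_conjTranspose, hdet', star_one]⟩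
    inv_mul_cancel := fun U => by
      ext1
      exact U.2.1.1 }

/-- The singlet state |ψ⁻⟩ = (|0⟩⊗|1⟩ − |1⟩⊗|0⟩)/√2 of two qubits. -/
noncomputable def singletVec : Fin 2 × Fin 2 → ℂ := fun p =>
  ((if p = (0, 1) then (1 : ℂ) else 0) - (if p = (1, 0) then (1 : ℂ) else 0))
    / (Real.sqrt 2 : ℂ)

/-- Π₀ = |ψ⁻⟩⟨ψ⁻|, the projector onto the singlet. -/
noncomputable def singletProj : Matrix (Fin 2 × Fin 2) (Fin 2 × Fin 2) ℂ :=
  Matrix.vecMulVec singletVec (star singletVec)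

/-- Π₁ = I − Π₀, the projector onto the triplet (symmetric) subspace. -/
noncomputable def tripletProj : Matrix (Fin 2 × Fin 2) (Fin 2 × Fin 2) ℂ :=
  1 - singletProj

/- ################ auxiliary definitions and lemmas ################ -/

namespace SU2Twirl

open Matrix

abbrev M2 := Matrix (Fin 2) (Fin 2) ℂ
abbrev M4 := Matrix (Fin 2 × Fin 2) (Fin 2 × Fin 2) ℂ

def swapM : M4 := Matrix.of fun p q => if p.1 = q.2 ∧ p.2 = q.1 then 1 else 0

noncomputable def V1m : M2 := !![Complex.I, 0; 0, -Complex.I]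
noncomputable def W3 : M2 := !![1, 1; -1, 1]
noncomputable def W4 : M2 := !![1, -Complex.I; -Complex.I, 1]
noncomputable def K1 : M4 := V1m ⊗ₖ V1m
noncomputable def K3 : M4 := W3 ⊗ₖ W3
noncomputable def K4 : M4 := W4 ⊗ₖ W4

lemma sqrt2_sq : (Real.sqrt 2 : ℂ) * (Real.sqrt 2 : ℂ) = 2 := by
  norm_cast
  rw [Real.mul_self_sqrt] <;> norm_num

lemma singletProj_eq : singletProj = (2⁻¹ : ℂ) • (1 - swapM) := by
  have h2 : (Real.sqrt 2 : ℂ) ≠ 0 := by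
    simp [Real.sqrt_eq_zero']
  ext ⟨a, b⟩ ⟨c, d⟩
  fin_cases a <;> fin_cases b <;> fin_cases c <;> fin_cases d <;>
    simp [singletProj, singletVec, swapM, Matrix.vecMulVec_apply, Matrix.one_apply,
      Prod.ext_iff, Matrix.smul_apply, Matrix.sub_apply, Pi.star_apply, RCLike.star_def,
      map_div₀, Complex.conj_ofReal] <;>
    (try field_simp) <;>
    first
      | ring1
      | linear_combination (2:ℂ) * sqrt2_sq
      | linear_combination (3:ℂ) * sqrt2_sq
      | linear_combination sqrt2_sq
      | linear_combination (-1:ℂ) * sqrt2_sq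
      | linear_combination (-2:ℂ) * sqrt2_sq
      | linear_combination (-3:ℂ) * sqrt2_sq

lemma star_kron (A B : M2) : star (A ⊗ₖ B) = (star A) ⊗ₖ (star B) := by
  ext ⟨a, b⟩ ⟨c, d⟩
  simp [Matrix.star_apply, Matrix.kroneckerMap_apply, mul_comm]

lemma swap_kron (A B : M2) : swapM * (A ⊗ₖ B) = (B ⊗ₖ A) * swapM := by
  ext ⟨a, b⟩ ⟨c, d⟩
  simp [swapM, Matrix.mul_apply, Fintype.sum_prod_type, Fin.sum_univ_two,
    Matrix.kroneckerMap_apply, Prod.ext_iff]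
  fin_cases a <;> fin_cases b <;> fin_cases c <;> fin_cases d <;> simp <;> ring

lemma commutant_aux (B : Matrix (Fin 2 × Fin 2) (Fin 2 × Fin 2) ℂ)
    (h1 : B * K1 = K1 * B) (h3 : B * K3 = K3 * B) (h4 : B * K4 = K4 * B) :
    B = ((2 * Matrix.trace B - Matrix.trace (swapM * B)) / 6) • (1 : Matrix (Fin 2 × Fin 2) (Fin 2 × Fin 2) ℂ)
      + ((2 * Matrix.trace (swapM * B) - Matrix.trace B) / 6) • swapM := by
  have ht : Matrix.trace B = B ((0:Fin 2),(0:Fin 2)) ((0:Fin 2),(0:Fin 2))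
      + B ((0:Fin 2),(1:Fin 2)) ((0:Fin 2),(1:Fin 2)) + B ((1:Fin 2),(0:Fin 2)) ((1:Fin 2),(0:Fin 2))
      + B ((1:Fin 2),(1:Fin 2)) ((1:Fin 2),(1:Fin 2)) := by
    simp [Matrix.trace, Fintype.sum_prod_type, Fin.sum_univ_two, Matrix.diag]
    ring
  have hs : Matrix.trace (swapM * B) = B ((0:Fin 2),(0:Fin 2)) ((0:Fin 2),(0:Fin 2))
      + B ((1:Fin 2),(0:Fin 2)) ((0:Fin 2),(1:Fin 2)) + B ((0:Fin 2),(1:Fin 2)) ((1:Fin 2),(0:Fin 2))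
      + B ((1:Fin 2),(1:Fin 2)) ((1:Fin 2),(1:Fin 2)) := by
    simp [Matrix.trace, swapM, Matrix.mul_apply, Fintype.sum_prod_type, Fin.sum_univ_two,
      Matrix.diag, Prod.ext_iff]
    ring
  have e1_0_1 := congrFun (congrFun h1 ((0:Fin 2),(0:Fin 2))) ((0:Fin 2),(1:Fin 2))
  have e1_0_2 := congrFun (congrFun h1 ((0:Fin 2),(0:Fin 2))) ((1:Fin 2),(0:Fin 2))
  have e1_1_0 := congrFun (congrFun h1 ((0:Fin 2),(1:Fin 2))) ((0:Fin 2),(0:Fin 2))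
  have e1_1_3 := congrFun (congrFun h1 ((0:Fin 2),(1:Fin 2))) ((1:Fin 2),(1:Fin 2))
  have e1_2_0 := congrFun (congrFun h1 ((1:Fin 2),(0:Fin 2))) ((0:Fin 2),(0:Fin 2))
  have e1_2_3 := congrFun (congrFun h1 ((1:Fin 2),(0:Fin 2))) ((1:Fin 2),(1:Fin 2))
  have e1_3_1 := congrFun (congrFun h1 ((1:Fin 2),(1:Fin 2))) ((0:Fin 2),(1:Fin 2))
  have e1_3_2 := congrFun (congrFun h1 ((1:Fin 2),(1:Fin 2))) ((1:Fin 2),(0:Fin 2))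
  have e3_0_0 := congrFun (congrFun h3 ((0:Fin 2),(0:Fin 2))) ((0:Fin 2),(0:Fin 2))
  have e3_0_1 := congrFun (congrFun h3 ((0:Fin 2),(0:Fin 2))) ((0:Fin 2),(1:Fin 2))
  have e3_0_2 := congrFun (congrFun h3 ((0:Fin 2),(0:Fin 2))) ((1:Fin 2),(0:Fin 2))
  have e3_0_3 := congrFun (congrFun h3 ((0:Fin 2),(0:Fin 2))) ((1:Fin 2),(1:Fin 2))
  have e3_1_0 := congrFun (congrFun h3 ((0:Fin 2),(1:Fin 2))) ((0:Fin 2),(0:Fin 2))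
  have e4_0_1 := congrFun (congrFun h4 ((0:Fin 2),(0:Fin 2))) ((0:Fin 2),(1:Fin 2))
  simp only [K1, K3, K4, V1m, W3, W4, Matrix.mul_apply, Fintype.sum_prod_type,
    Fin.sum_univ_two, Matrix.kroneckerMap_apply, Matrix.cons_val', Matrix.cons_val_zero,
    Matrix.cons_val_one, Matrix.head_cons, Matrix.head_fin_const, Matrix.empty_val',
    Matrix.cons_val_fin_one, Matrix.of_apply] at e1_0_1 e1_0_2 e1_1_0 e1_1_3 e1_2_0 e1_2_3 e1_3_1 e1_3_2 e3_0_0 e3_0_1 e3_0_2 e3_0_3 e3_1_0 e4_0_1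
  have hI : Complex.I * Complex.I = -1 := Complex.I_mul_I
  rw [ht, hs]
  ext ⟨a, b⟩ ⟨c, d⟩
  fin_cases a <;> fin_cases b <;> fin_cases c <;> fin_cases d <;>
    simp only [Matrix.add_apply, Matrix.smul_apply, Matrix.one_apply, smul_eq_mul, swapM,
      Matrix.of_apply, Prod.mk.injEq, Fin.isValue, and_self, if_true, if_false, 
       and_false, false_and, ite_true, ite_false, one_ne_zero, zero_ne_one,
      reduceIte, mul_one, mul_zero, add_zero, zero_add, Fin.mk_zero, Fin.mk_one]
  · linear_combination (-1/12) * e1_0_1 + ((-1/6) + (1/12)*Complex.I) * e1_0_2 + (-1/6) * e1_1_3 + (-1/6) * e1_2_3 + ((-1/12)*Complex.I) * e1_3_1 + (1/12) * e1_3_2 + (1/6) * e3_0_2 + (1/3) * e3_0_3 + ((1/6)*Complex.I) * e4_0_1 + ((1/6) * B ((0:Fin 2),(0:Fin 2)) ((0:Fin 2),(0:Fin 2)) + (-1/6) * B ((0:Fin 2),(0:Fin 2)) ((0:Fin 2),(1:Fin 2)) + (-1/3) * B ((0:Fin 2),(0:Fin 2)) ((1:Fin 2),(0:Fin 2)) +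 (1/6) * B ((0:Fin 2),(0:Fin 2)) ((1:Fin 2),(1:Fin 2)) + (-1/6) * B ((0:Fin 2),(1:Fin 2)) ((0:Fin 2),(1:Fin 2)) + (1/3) * B ((0:Fin 2),(1:Fin 2)) ((1:Fin 2),(1:Fin 2)) + (-1/6) * B ((1:Fin 2),(0:Fin 2)) ((0:Fin 2),(1:Fin 2)) + (1/3) * B ((1:Fin 2),(0:Fin 2)) ((1:Fin 2),(1:Fin 2)) + (1/6) * B ((1:Fin 2),(1:Fin 2)) ((1:Fin 2),(0:Fin 2))) * hI
  · linear_combination (1/2) * e1_0_1 + (1 * B ((0:Fin 2),(0:Fin 2)) ((0:Fin 2),(1:Fin 2))) * hI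
  · linear_combination (1/2) * e1_0_2 + (1 * B ((0:Fin 2),(0:Fin 2)) ((1:Fin 2),(0:Fin 2))) * hI
  · linear_combination ((-1/4) + (1/4)*Complex.I) * e1_0_2 + ((-1/4) + (-1/4)*Complex.I) * e1_3_1 + (-1/2) * e3_0_1 + ((1/2)*Complex.I) * e4_0_1 + ((1/2) * B ((0:Fin 2),(0:Fin 2)) ((0:Fin 2),(0:Fin 2)) + (-1/2) * B ((0:Fin 2),(0:Fin 2)) ((1:Fin 2),(0:Fin 2)) + (1/2) * B ((0:Fin 2),(0:Fin 2)) ((1:Fin 2),(1:Fin 2)) + (-1/2) * B ((0:Fin 2),(1:Fin 2)) ((0:Fin 2),(1:Fin 2)) + (-1/2) * B ((1:Fin 2),(0:Fin 2)) ((0:Fin 2),(1:Fin 2)) + (-1/2) * B ((1:Fin 2),(1:Fin 2)) ((0:Fin 2),(1:Fin 2))) * hI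
  · linear_combination (-1/2) * e1_1_0 + (1 * B ((0:Fin 2),(1:Fin 2)) ((0:Fin 2),(0:Fin 2))) * hI
  · linear_combination (1/3) * e1_0_1 + ((1/6) + (-1/12)*Complex.I) * e1_0_2 + (-1/4) * e1_1_0 + (-1/3) * e1_1_3 + (-1/2) * e1_2_0 + (-1/12) * e1_2_3 + ((1/12)*Complex.I) * e1_3_1 + (1/6) * e1_3_2 + (1/2) * e3_0_0 + (1/3) * e3_0_2 + (1/6) * e3_0_3 + (-1/2) * e3_1_0 + ((-1/6)*Complex.I) * e4_0_1 + ((-1/6) * B ((0:Fin 2),(0:Fin 2)) ((0:Fin 2),(0:Fin 2)) + (2/3) * B ((0:Fin 2),(0:Fin 2)) ((0:Fin 2),(1:Fin 2)) + (1/3) * B ((0:Fin 2),(0:Fin 2)) ((1:Fin 2),(0:Fin 2)) + (-1/6) * B ((0:Fin 2),(0:Fin 2)) ((1:Fin 2),(1:Fin 2)) + (1/2) * B ((0:Fin 2),(1:Fin 2)) ((0:Fin 2),(0:Fin 2)) + (1/6) * B ((0:Fin 2),(1:Fin 2)) ((0:Fin 2),(1:Fin 2)) + (2/3) * B ((0:Fin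 2),(1:Fin 2)) ((1:Fin 2),(1:Fin 2)) + 1 * B ((1:Fin 2),(0:Fin 2)) ((0:Fin 2),(0:Fin 2)) + (1/6) * B ((1:Fin 2),(0:Fin 2)) ((0:Fin 2),(1:Fin 2)) + (1/6) * B ((1:Fin 2),(0:Fin 2)) ((1:Fin 2),(1:Fin 2)) + (1/3) * B ((1:Fin 2),(1:Fin 2)) ((1:Fin 2),(0:Fin 2))) * hI
  · linear_combination (1/12) * e1_0_1 + ((5/12) + (-1/12)*Complex.I) * e1_0_2 + (-1/4) * e1_1_0 + (-1/3) * e1_1_3 + (-1/2) * e1_2_0 + (-1/12) * e1_2_3 + ((1/4) + (1/12)*Complex.I) * e1_3_1 + (-1/12) * e1_3_2 + (1/2) * e3_0_0 + (1/2) * e3_0_1 + (-1/6) * e3_0_2 + (1/6) * e3_0_3 + (-1/2) * e3_1_0 + ((-1/6)*Complex.I) * e4_0_1 + ((-1/6) * B ((0:Fin 2),(0:Fin 2)) ((0:Fin 2),(0:Fin 2)) + (1/6) * B ((0:Fin 2),(0:Fin 2)) ((0:Fin 2),(1:Fin 2)) + (5/6) * B ((0:Fin 2),(0:Fin 2)) ((1:Fin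 2),(0:Fin 2)) + (-1/6) * B ((0:Fin 2),(0:Fin 2)) ((1:Fin 2),(1:Fin 2)) + (1/2) * B ((0:Fin 2),(1:Fin 2)) ((0:Fin 2),(0:Fin 2)) + (1/6) * B ((0:Fin 2),(1:Fin 2)) ((0:Fin 2),(1:Fin 2)) + (2/3) * B ((0:Fin 2),(1:Fin 2)) ((1:Fin 2),(1:Fin 2)) + 1 * B ((1:Fin 2),(0:Fin 2)) ((0:Fin 2),(0:Fin 2)) + (1/6) * B ((1:Fin 2),(0:Fin 2)) ((0:Fin 2),(1:Fin 2)) + (1/6) * B ((1:Fin 2),(0:Fin 2)) ((1:Fin 2),(1:Fin 2)) + (1/2) * B ((1:Fin 2),(1:Fin 2)) ((0:Fin 2),(1:Fin 2)) + (-1/6) * B ((1:Fin 2),(1:Fin 2)) ((1:Fin 2),(0:Fin 2))) * hI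
  · linear_combination (-1/2) * e1_1_3 + (1 * B ((0:Fin 2),(1:Fin 2)) ((1:Fin 2),(1:Fin 2))) * hI
  · linear_combination (-1/2) * e1_2_0 + (1 * B ((1:Fin 2),(0:Fin 2)) ((0:Fin 2),(0:Fin 2))) * hI
  · linear_combination (-5/12) * e1_0_1 + ((-7/12) + (-1/12)*Complex.I) * e1_0_2 + (1/4) * e1_1_0 + (1/6) * e1_1_3 + (1/2) * e1_2_0 + (-1/12) * e1_2_3 + ((-1/4) + (1/12)*Complex.I) * e1_3_1 + (-1/12) * e1_3_2 + (-1/2) * e3_0_0 + (-1/2) * e3_0_1 + (-1/6) * e3_0_2 + (1/6) * e3_0_3 + (1/2) * e3_1_0 + ((-1/6)*Complex.I) * e4_0_1 + ((-1/6) * B ((0:Fin 2),(0:Fin 2)) ((0:Fin 2),(0:Fin 2)) + (-5/6) * B ((0:Fin 2),(0:Fin 2)) ((0:Fin 2),(1:Fin 2)) + (-7/6) * B ((0:Fin 2),(0:Fin 2)) ((1:Fin 2),(0:Fin 2)) + (-1/6) * B ((0:Fin 2),(0:Fin 2)) ((1:Fin 2),(1:Fin 2)) + (-1/2) * B ((0:Fin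 2),(1:Fin 2)) ((0:Fin 2),(0:Fin 2)) + (1/6) * B ((0:Fin 2),(1:Fin 2)) ((0:Fin 2),(1:Fin 2)) + (-1/3) * B ((0:Fin 2),(1:Fin 2)) ((1:Fin 2),(1:Fin 2)) + (-1) * B ((1:Fin 2),(0:Fin 2)) ((0:Fin 2),(0:Fin 2)) + (1/6) * B ((1:Fin 2),(0:Fin 2)) ((0:Fin 2),(1:Fin 2)) + (1/6) * B ((1:Fin 2),(0:Fin 2)) ((1:Fin 2),(1:Fin 2)) + (-1/2) * B ((1:Fin 2),(1:Fin 2)) ((0:Fin 2),(1:Fin 2)) + (-1/6) * B ((1:Fin 2),(1:Fin 2)) ((1:Fin 2),(0:Fin 2))) * hI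
  · linear_combination (-2/3) * e1_0_1 + ((-1/3) + (-1/12)*Complex.I) * e1_0_2 + (1/4) * e1_1_0 + (1/6) * e1_1_3 + (1/2) * e1_2_0 + (-1/12) * e1_2_3 + ((1/12)*Complex.I) * e1_3_1 + (-1/3) * e1_3_2 + (-1/2) * e3_0_0 + (-2/3) * e3_0_2 + (1/6) * e3_0_3 + (1/2) * e3_1_0 + ((-1/6)*Complex.I) * e4_0_1 + ((-1/6) * B ((0:Fin 2),(0:Fin 2)) ((0:Fin 2),(0:Fin 2)) + (-4/3) * B ((0:Fin 2),(0:Fin 2)) ((0:Fin 2),(1:Fin 2)) + (-2/3) * B ((0:Fin 2),(0:Fin 2)) ((1:Fin 2),(0:Fin 2)) + (-1/6) * B ((0:Fin 2),(0:Fin 2)) ((1:Fin 2),(1:Fin 2)) + (-1/2) * B ((0:Fin 2),(1:Fin 2)) ((0:Fin 2),(0:Fin 2)) + (1/6) * B ((0:Fin 2),(1:Fin 2)) ((0:Fin 2),(1:Fin 2)) + (-1/3) * B ((0:Fin 2),(1:Fin 2)) ((1:Fin 2),(1:Fin 2)) + (-1) * B ((1:Fin 2),(0:Fin 2)) ((0:Fin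 2),(0:Fin 2)) + (1/6) * B ((1:Fin 2),(0:Fin 2)) ((0:Fin 2),(1:Fin 2)) + (1/6) * B ((1:Fin 2),(0:Fin 2)) ((1:Fin 2),(1:Fin 2)) + (-2/3) * B ((1:Fin 2),(1:Fin 2)) ((1:Fin 2),(0:Fin 2))) * hI
  · linear_combination (-1/2) * e1_2_3 + (1 * B ((1:Fin 2),(0:Fin 2)) ((1:Fin 2),(1:Fin 2))) * hI
  · linear_combination (-1/2) * e1_0_1 + ((-3/4) + (1/4)*Complex.I) * e1_0_2 + (1/2) * e1_1_0 + (1/2) * e1_2_0 + ((-1/4) + (-1/4)*Complex.I) * e1_3_1 + (-1) * e3_0_0 + (-1/2) * e3_0_1 + ((1/2)*Complex.I) * e4_0_1 + ((1/2) * B ((0:Fin 2),(0:Fin 2)) ((0:Fin 2),(0:Fin 2)) + (-1) * B ((0:Fin 2),(0:Fin 2)) ((0:Fin 2),(1:Fin 2)) + (-3/2) * B ((0:Fin 2),(0:Fin 2)) ((1:Fin 2),(0:Fin 2)) + (1/2) * B ((0:Fin 2),(0:Fin 2)) ((1:Fin 2),(1:Fin 2)) + (-1) * B ((0:Fin 2),(1:Fin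 2)) ((0:Fin 2),(0:Fin 2)) + (-1/2) * B ((0:Fin 2),(1:Fin 2)) ((0:Fin 2),(1:Fin 2)) + (-1) * B ((1:Fin 2),(0:Fin 2)) ((0:Fin 2),(0:Fin 2)) + (-1/2) * B ((1:Fin 2),(0:Fin 2)) ((0:Fin 2),(1:Fin 2)) + (-1/2) * B ((1:Fin 2),(1:Fin 2)) ((0:Fin 2),(1:Fin 2))) * hI
  · linear_combination (1/2) * e1_3_1 + (1 * B ((1:Fin 2),(1:Fin 2)) ((0:Fin 2),(1:Fin 2))) * hI
  · linear_combination (1/2) * e1_3_2 + (1 * B ((1:Fin 2),(1:Fin 2)) ((1:Fin 2),(0:Fin 2))) * hI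
  · linear_combination (5/12) * e1_0_1 + ((1/3) + (1/12)*Complex.I) * e1_0_2 + (1/3) * e1_1_3 + (1/3) * e1_2_3 + ((-1/12)*Complex.I) * e1_3_1 + (1/12) * e1_3_2 + (1/6) * e3_0_2 + (-2/3) * e3_0_3 + ((1/6)*Complex.I) * e4_0_1 + ((1/6) * B ((0:Fin 2),(0:Fin 2)) ((0:Fin 2),(0:Fin 2)) + (5/6) * B ((0:Fin 2),(0:Fin 2)) ((0:Fin 2),(1:Fin 2)) + (2/3) * B ((0:Fin 2),(0:Fin 2)) ((1:Fin 2),(0:Fin 2)) + (1/6) * B ((0:Fin 2),(0:Fin 2)) ((1:Fin 2),(1:Fin 2)) + (-1/6) * B ((0:Fin 2),(1:Fin 2)) ((0:Fin 2),(1:Fin 2)) + (-2/3) * B ((0:Fin 2),(1:Fin 2)) ((1:Fin 2),(1:Fin 2)) + (-1/6) * B ((1:Fin 2),(0:Fin 2)) ((0:Fin 2),(1:Fin 2)) + (-2/3) * B ((1:Fin 2),(0:Fin 2)) ((1:Fin 2),(1:Fin 2)) + (1/6) * B ((1:Fin 2),(1:Fin 2)) ((1:Fin 2),(0:Fin 2)))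 * hI

/-- SU(2) as a subtype. -/
abbrev SU2 := ↥(Matrix.specialUnitaryGroup (Fin 2) ℂ)

lemma mem_su2_V1m : V1m ∈ Matrix.specialUnitaryGroup (Fin 2) ℂ := by
  rw [Matrix.mem_specialUnitaryGroup_iff]
  constructor
  · rw [Matrix.mem_unitaryGroup_iff]
    ext i j
    fin_cases i <;> fin_cases j <;>
      simp [V1m, Matrix.mul_apply, Fin.sum_univ_two, Matrix.star_apply, Matrix.one_apply,
        Complex.ext_iff]
  · simp [V1m, Matrix.det_fin_two_of, Complex.ext_iff]

lemma mem_su2_W3 : ((Real.sqrt 2 : ℂ)⁻¹ • W3) ∈ Matrix.specialUnitaryGroup (Fin 2) ℂ := by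
  have h2 : (Real.sqrt 2 : ℂ) ≠ 0 := by simp [Real.sqrt_eq_zero']
  rw [Matrix.mem_specialUnitaryGroup_iff]
  constructor
  · rw [Matrix.mem_unitaryGroup_iff]
    ext i j
    fin_cases i <;> fin_cases j <;>
      simp [W3, Matrix.mul_apply, Fin.sum_univ_two, Matrix.star_apply, Matrix.one_apply,
        Matrix.smul_apply, map_inv₀, Complex.conj_ofReal, smul_eq_mul] <;>
      field_simp <;>
      first
        | ring1
        | linear_combination sqrt2_sq
        | linear_combination (-1:ℂ) * sqrt2_sq
        | linear_combination (2:ℂ) * sqrt2_sq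
        | linear_combination (-2:ℂ) * sqrt2_sq
  · rw [Matrix.det_smul]
    simp [W3, Matrix.det_fin_two_of]
    field_simp
    first
      | ring1
      | linear_combination sqrt2_sq
      | linear_combination (-1:ℂ) * sqrt2_sq
      | linear_combination (2:ℂ) * sqrt2_sq
      | linear_combination (-2:ℂ) * sqrt2_sq

lemma mem_su2_W4 : ((Real.sqrt 2 : ℂ)⁻¹ • W4) ∈ Matrix.specialUnitaryGroup (Fin 2) ℂ := by
  have h2 : (Real.sqrt 2 : ℂ) ≠ 0 := by simp [Real.sqrt_eq_zero']
  rw [Matrix.mem_specialUnitaryGroup_iff]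
  constructor
  · rw [Matrix.mem_unitaryGroup_iff]
    ext i j
    fin_cases i <;> fin_cases j <;>
      simp [W4, Matrix.mul_apply, Fin.sum_univ_two, Matrix.star_apply, Matrix.one_apply,
        Matrix.smul_apply, map_inv₀, Complex.conj_ofReal, smul_eq_mul, Complex.ext_iff] <;>
      field_simp <;>
      first
        | ring1
        | linear_combination sqrt2_sq
        | linear_combination (-1:ℂ) * sqrt2_sq
        | linear_combination (2:ℂ) * sqrt2_sq
        | linear_combination (-2:ℂ) * sqrt2_sq
        | (rw [Real.sq_sqrt (by norm_num)]; norm_num)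
  · rw [Matrix.det_smul]
    simp [W4, Matrix.det_fin_two_of, Complex.I_mul_I]
    field_simp
    first
      | ring1
      | linear_combination sqrt2_sq
      | linear_combination (-1:ℂ) * sqrt2_sq
      | linear_combination (2:ℂ) * sqrt2_sq
      | linear_combination (-2:ℂ) * sqrt2_sq
      | linear_combination (2:ℂ) * Complex.I * sqrt2_sq
      | linear_combination (-2:ℂ) * Complex.I * sqrt2_sq

noncomputable def g1 : SU2 := ⟨V1m, mem_su2_V1m⟩
noncomputable def g3 : SU2 := ⟨(Real.sqrt 2 : ℂ)⁻¹ • W3, mem_su2_W3⟩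
noncomputable def g4 : SU2 := ⟨(Real.sqrt 2 : ℂ)⁻¹ • W4, mem_su2_W4⟩

lemma g3_kron : (g3 : M2) ⊗ₖ (g3 : M2) = (2⁻¹ : ℂ) • K3 := by
  show ((Real.sqrt 2 : ℂ)⁻¹ • W3) ⊗ₖ ((Real.sqrt 2 : ℂ)⁻¹ • W3) = (2⁻¹ : ℂ) • K3
  rw [Matrix.smul_kronecker, Matrix.kronecker_smul, smul_smul, K3, ← mul_inv, sqrt2_sq]

lemma g4_kron : (g4 : M2) ⊗ₖ (g4 : M2) = (2⁻¹ : ℂ) • K4 := by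
  show ((Real.sqrt 2 : ℂ)⁻¹ • W4) ⊗ₖ ((Real.sqrt 2 : ℂ)⁻¹ • W4) = (2⁻¹ : ℂ) • K4
  rw [Matrix.smul_kronecker, Matrix.kronecker_smul, smul_smul, K4, ← mul_inv, sqrt2_sq]

lemma kron_unitary_left (U : SU2) :
    star ((U : M2) ⊗ₖ (U : M2)) * ((U : M2) ⊗ₖ (U : M2)) = 1 := by
  have hu : (U : M2) ∈ Matrix.unitaryGroup (Fin 2) ℂ := (Submonoid.mem_inf.mp U.2).1
  rw [star_kron, ← Matrix.mul_kronecker_mul]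
  rw [Matrix.mem_unitaryGroup_iff'] at hu
  rw [hu, Matrix.one_kronecker_one]

lemma kron_trace_conj (U : SU2) (σ : M4) :
    Matrix.trace (((U : M2) ⊗ₖ (U : M2)) * σ * star ((U : M2) ⊗ₖ (U : M2))) =
      Matrix.trace σ := by
  rw [Matrix.trace_mul_comm, ← Matrix.mul_assoc, kron_unitary_left, Matrix.one_mul]

end SU2Twirl

open SU2Twirl

theorem su2_twirl_two_qubits
    [BorelSpace ↥(Matrix.specialUnitaryGroup (Fin 2) ℂ)]
    (μ : Measure ↥(Matrix.specialUnitaryGroup (Fin 2) ℂ))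
    [μ.IsHaarMeasure] [IsProbabilityMeasure μ]
    (ρ : Matrix (Fin 2 × Fin 2) (Fin 2 × Fin 2) ℂ) :
    (∫ U, ((U : Matrix (Fin 2) (Fin 2) ℂ) ⊗ₖ (U : Matrix (Fin 2) (Fin 2) ℂ)) * ρ *
        star ((U : Matrix (Fin 2) (Fin 2) ℂ) ⊗ₖ (U : Matrix (Fin 2) (Fin 2) ℂ)) ∂μ)
      = (Matrix.trace (tripletProj * ρ) / 3) • tripletProj
        + Matrix.trace (singletProj * ρ) • singletProj := by
  classical
  set f : SU2 → M4 := fun U =>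
    ((U : M2) ⊗ₖ (U : M2)) * ρ * star ((U : M2) ⊗ₖ (U : M2)) with hf
  -- continuity
  have hcoe : Continuous (fun U : SU2 => (U : M2)) := continuous_subtype_val
  have hkron : Continuous (fun U : SU2 => (U : M2) ⊗ₖ (U : M2)) := by
    apply continuous_matrix
    intro i j
    exact ((hcoe.matrix_elem _ _).mul (hcoe.matrix_elem _ _))
  have hcont : Continuous f := by
    exact ((hkron.matrix_mul continuous_const).matrix_mul hkron.star)
  -- boundedness
  have hXent : ∀ (U : SU2) (p q : Fin 2 × Fin 2), ‖((U : M2) ⊗ₖ (U : M2)) p q‖ ≤ 1 := by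
    intro U p q
    have hu : (U : M2) ∈ Matrix.unitaryGroup (Fin 2) ℂ := (Submonoid.mem_inf.mp U.2).1
    have h1 := entry_norm_bound_of_unitary hu p.1 q.1
    have h2 := entry_norm_bound_of_unitary hu p.2 q.2
    calc ‖((U : M2) ⊗ₖ (U : M2)) p q‖ = ‖(U : M2) p.1 q.1‖ * ‖(U : M2) p.2 q.2‖ := by
          simp [Matrix.kroneckerMap_apply]
      _ ≤ 1 * 1 := by
          exact mul_le_mul h1 h2 (norm_nonneg _) zero_le_one
      _ = 1 := by norm_num
  have hXρent : ∀ (U : SU2) (p q : Fin 2 × Fin 2),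
      ‖(((U : M2) ⊗ₖ (U : M2)) * ρ) p q‖ ≤ 4 * ‖ρ‖ := by
    intro U p q
    rw [Matrix.mul_apply]
    calc ‖∑ r, ((U : M2) ⊗ₖ (U : M2)) p r * ρ r q‖
        ≤ ∑ r, ‖((U : M2) ⊗ₖ (U : M2)) p r * ρ r q‖ := norm_sum_le _ _
      _ ≤ ∑ _r : Fin 2 × Fin 2, 1 * ‖ρ‖ := by
          refine Finset.sum_le_sum fun r _ => ?_
          rw [norm_mul]
          exact mul_le_mul (hXent U p r) (Matrix.norm_entry_le_entrywise_sup_norm ρ)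
            (norm_nonneg _) zero_le_one
      _ = 4 * ‖ρ‖ := by simp [Fintype.card_prod]; try ring
  have hbound : ∀ U : SU2, ‖f U‖ ≤ 16 * ‖ρ‖ := by
    intro U
    rw [Matrix.norm_le_iff (by positivity)]
    intro p q
    rw [hf]
    simp only []
    rw [Matrix.mul_apply]
    calc ‖∑ r, (((U : M2) ⊗ₖ (U : M2)) * ρ) p r * star ((U : M2) ⊗ₖ (U : M2)) r q‖
        ≤ ∑ r, ‖(((U : M2) ⊗ₖ (U : M2)) * ρ) p r * star ((U : M2) ⊗ₖ (U : M2)) r q‖ :=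
          norm_sum_le _ _
      _ ≤ ∑ _r : Fin 2 × Fin 2, (4 * ‖ρ‖) * 1 := by
          refine Finset.sum_le_sum fun r _ => ?_
          rw [norm_mul]
          refine mul_le_mul (hXρent U p r) ?_ (norm_nonneg _) (by positivity)
          rw [Matrix.star_apply, norm_star]
          exact hXent U q r
      _ = 16 * ‖ρ‖ := by simp [Fintype.card_prod]; try ring
  have hInt : @Integrable M4 PseudoMetricSpace.toUniformSpace.toTopologicalSpace
      SeminormedAddGroup.toContinuousENorm _ _ f μ :=
    ⟨(show @Continuous _ M4 _ PseudoMetricSpace.toUniformSpace.toTopologicalSpace f from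
      hcont).aestronglyMeasurable, HasFiniteIntegral.of_bounded (ae_of_all μ hbound)⟩
  set B : M4 := ∫ U, f U ∂μ with hB
  -- continuous linear maps through the integral
  have hswap : ∀ P Q : M4, (∫ U, P * f U * Q ∂μ) = P * B * Q := by
    intro P Q
    have L : M4 →L[ℂ] M4 :=
      LinearMap.toContinuousLinearMap ((LinearMap.mulRight ℂ Q).comp (LinearMap.mulLeft ℂ P))
    have h := ContinuousLinearMap.integral_comp_comm
      (LinearMap.toContinuousLinearMap ((LinearMap.mulRight ℂ Q).comp (LinearMap.mulLeft ℂ P)))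
      hInt
    exact h
  have htrL : ∀ P : M4, (∫ U, Matrix.trace (P * f U) ∂μ) = Matrix.trace (P * B) := by
    intro P
    have h := ContinuousLinearMap.integral_comp_comm
      (LinearMap.toContinuousLinearMap
        ((Matrix.traceLinearMap (Fin 2 × Fin 2) ℂ ℂ).comp (LinearMap.mulLeft ℂ P)))
      hInt
    exact h
  -- invariance
  have hinv : ∀ V : SU2, ((V : M2) ⊗ₖ (V : M2)) * B * star ((V : M2) ⊗ₖ (V : M2)) = B := by
    intro V
    rw [← hswap]
    have hptw : ∀ U : SU2,
        ((V : M2) ⊗ₖ (V : M2)) * f U * star ((V : M2) ⊗ₖ (V : M2)) = f (V * U) := by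
      intro U
      rw [hf]
      simp only [Submonoid.coe_mul]
      rw [Matrix.mul_kronecker_mul, star_mul]
      simp only [Matrix.mul_assoc]
    rw [integral_congr_ae (ae_of_all μ hptw)]
    exact integral_mul_left_eq_self f V
  have hcomm : ∀ V : SU2, B * ((V : M2) ⊗ₖ (V : M2)) = ((V : M2) ⊗ₖ (V : M2)) * B := by
    intro V
    conv_lhs => rw [← hinv V]
    rw [Matrix.mul_assoc, Matrix.mul_assoc, kron_unitary_left, Matrix.mul_one]
  -- the three commutation relations
  have h1 : B * K1 = K1 * B := hcomm g1
  have h3 : B * K3 = K3 * B := by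
    have h := hcomm g3
    rw [g3_kron] at h
    rw [Matrix.mul_smul, Matrix.smul_mul] at h
    exact smul_right_injective M4 (by norm_num : (2⁻¹ : ℂ) ≠ 0) h
  have h4 : B * K4 = K4 * B := by
    have h := hcomm g4
    rw [g4_kron] at h
    rw [Matrix.mul_smul, Matrix.smul_mul] at h
    exact smul_right_injective M4 (by norm_num : (2⁻¹ : ℂ) ≠ 0) h
  -- traces
  have htrB : Matrix.trace B = Matrix.trace ρ := by
    have h := htrL 1
    rw [Matrix.one_mul] at h
    rw [← h]
    have hptw : ∀ U : SU2, Matrix.trace (1 * f U) = Matrix.trace ρ := by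
      intro U
      rw [Matrix.one_mul, hf]
      exact kron_trace_conj U ρ
    rw [integral_congr_ae (ae_of_all μ hptw), integral_const]
    simp
  have htrSB : Matrix.trace (swapM * B) = Matrix.trace (swapM * ρ) := by
    rw [← htrL swapM]
    have hptw : ∀ U : SU2, Matrix.trace (swapM * f U) = Matrix.trace (swapM * ρ) := by
      intro U
      rw [hf]
      have : swapM * (((U : M2) ⊗ₖ (U : M2)) * ρ * star ((U : M2) ⊗ₖ (U : M2)))
          = ((U : M2) ⊗ₖ (U : M2)) * (swapM * ρ) * star ((U : M2) ⊗ₖ (U : M2)) := by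
        simp only [← Matrix.mul_assoc]
        rw [swap_kron]
      rw [this, kron_trace_conj]
    rw [integral_congr_ae (ae_of_all μ hptw), integral_const]
    simp
  -- apply the commutant characterization
  have hBeq := commutant_aux B h1 h3 h4
  rw [htrB, htrSB] at hBeq
  -- final algebra
  have e0 : Matrix.trace (singletProj * ρ)
      = 2⁻¹ * (Matrix.trace ρ - Matrix.trace (swapM * ρ)) := by
    rw [singletProj_eq, Matrix.smul_mul, Matrix.trace_smul, Matrix.sub_mul,
      Matrix.trace_sub, Matrix.one_mul]
    simp [smul_eq_mul]
  have e1 : Matrix.trace (tripletProj * ρ)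
      = 2⁻¹ * (Matrix.trace ρ + Matrix.trace (swapM * ρ)) := by
    rw [show tripletProj = 1 - singletProj from rfl, Matrix.sub_mul, Matrix.trace_sub,
      Matrix.one_mul, e0]
    ring
  rw [hBeq, e0, e1, show tripletProj = 1 - singletProj from rfl, singletProj_eq]
  module
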